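/- Let n ≥ 2, σ > 0, and on ℝ^n define the Gaussian densities p_i(x) = N(x; e_i, σ² I) for i = 1,…,n (where e_i are the standard basis vectors), the uniform mixture p_u = (1/n) ∑_{i=1}^n p_i, and the Bayes-composed unnormalized density g(x) := p_u(x) · ∏_{i=1}^n p_i(x)/p_u(x). Restricted to the diagonal x = (α, α, …, α), the function α ↦ g((α,…,α)) is proportional to exp(−(nα² − 2α + 1)/(2σ²)) and is uniquely maximized at α* = 1/n. -/

import Mathlib

open MeasureTheory Finset Real

noncomputable section

/-- The isotropic Gaussian density `N(x; μ, σ² I)` on `ℝ^n`. -/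
def gaussMean {n : ℕ} (σ : ℝ) (μ : Fin n → ℝ) (x : Fin n → ℝ) : ℝ :=
  (2 * π * σ ^ 2) ^ (-(n : ℝ) / 2) * Real.exp (-(∑ i, (x i - μ i) ^ 2) / (2 * σ ^ 2))

/-- **The Bayes composition fails to length-generalize.** With `p_i = N(e_i, σ² I)`,
`p_u = (1/n) ∑ i, p_i` and the Bayes-composed unnormalized density
`g(x) = p_u(x) ∏ i, p_i(x)/p_u(x)`, the restriction of `g` to the diagonal
`x = (α,…,α)` is proportional to `exp(−(nα² − 2α + 1)/(2σ²))` and uniquely maximized at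
`α* = 1/n`. -/
theorem statement_17 (n : ℕ) (hn : 2 ≤ n) (σ : ℝ) (hσ : 0 < σ) :
    let p : Fin n → (Fin n → ℝ) → ℝ := fun i => gaussMean σ (Pi.single i 1)
    let pu : (Fin n → ℝ) → ℝ := fun x => (1 / (n : ℝ)) * ∑ i, p i x
    let g : (Fin n → ℝ) → ℝ := fun x => pu x * ∏ i, p i x / pu x
    (∃ c : ℝ, 0 < c ∧ ∀ α : ℝ,
      g (fun _ => α) =
        c * Real.exp (-((n : ℝ) * α ^ 2 - 2 * α + 1) / (2 * σ ^ 2))) ∧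
    (∀ α : ℝ, α ≠ 1 / (n : ℝ) → g (fun _ => α) < g (fun _ => 1 / (n : ℝ))) := by
  intro p pu g
  have hnR : (0:ℝ) < n := by
    have : 0 < n := lt_of_lt_of_le (by norm_num) hn
    exact_mod_cast this
  have hπ : (0:ℝ) < 2 * π * σ ^ 2 := by positivity
  set c : ℝ := (2 * π * σ ^ 2) ^ (-(n : ℝ) / 2) with hc
  have hcpos : 0 < c := Real.rpow_pos_of_pos hπ _
  have key : ∀ (α : ℝ) (i : Fin n),
      p i (fun _ => α) = c * Real.exp (-((n:ℝ)*α^2 - 2*α + 1) / (2*σ^2)) := by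
    intro α i
    have hsum : (∑ j, (α - (Pi.single i 1 : Fin n → ℝ) j) ^ 2) = (n:ℝ)*α^2 - 2*α + 1 := by
      have h1 : ∀ j : Fin n, (α - (Pi.single i 1 : Fin n → ℝ) j)^2
          = α^2 + (if j = i then (1 - 2*α) else 0) := by
        intro j
        rcases eq_or_ne j i with h | h
        · simp [h, Pi.single_apply]; ring
        · simp [h, Pi.single_apply]
      rw [Finset.sum_congr rfl (fun j _ => h1 j), Finset.sum_add_distrib,
        Finset.sum_const, Finset.sum_ite_eq' Finset.univ i]
      simp [Finset.card_univ]
      ring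
    simp only [p, gaussMean, hsum, hc]
  have hg : ∀ α : ℝ, g (fun _ => α)
      = c * Real.exp (-((n:ℝ)*α^2 - 2*α + 1) / (2*σ^2)) := by
    intro α
    have hpu : pu (fun _ => α) = c * Real.exp (-((n:ℝ)*α^2 - 2*α + 1) / (2*σ^2)) := by
      simp only [pu]
      rw [Finset.sum_congr rfl (fun i _ => key α i), Finset.sum_const, Finset.card_univ,
        Fintype.card_fin]
      rw [nsmul_eq_mul]
      field_simp
    have hpu0 : pu (fun _ => α) ≠ 0 := by
      rw [hpu]; positivity
    simp only [g]
    rw [Finset.prod_congr rfl (fun i _ => by rw [key α i, ← hpu, div_self hpu0]),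
      Finset.prod_const_one, mul_one, hpu]
  refine ⟨⟨c, hcpos, hg⟩, ?_⟩
  intro α hα
  rw [hg, hg]
  have h2σ : (0:ℝ) < 2*σ^2 := by positivity
  have hsq : 0 < (α - 1/(n:ℝ))^2 := by
    have : α - 1/(n:ℝ) ≠ 0 := sub_ne_zero.2 hα
    positivity
  have hninv : (n:ℝ) * (1/(n:ℝ)) = 1 := by field_simp
  have hlt : -((n:ℝ)*α^2 - 2*α + 1) / (2*σ^2)
      < -((n:ℝ)*(1/(n:ℝ))^2 - 2*(1/(n:ℝ)) + 1) / (2*σ^2) := by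
    apply div_lt_div_of_pos_right ?_ h2σ
    have hne : (n:ℝ) ≠ 0 := ne_of_gt hnR
    have expand : (n:ℝ)*(α - 1/(n:ℝ))^2 = (n:ℝ)*α^2 - 2*α + 1/(n:ℝ) := by
      field_simp; ring
    have h3 : (n:ℝ)*(1/(n:ℝ))^2 = 1/(n:ℝ) := by field_simp
    nlinarith [mul_pos hnR hsq]
  exact mul_lt_mul_of_pos_left (Real.exp_lt_exp.2 hlt) hcpos
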